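/- Let s = h ⊕ g₁ where h is abelian and g₁ = span(X₁,...,X_n) is an abelian ideal of s consisting of ad(h)-eigenvectors, and let M be a weight s-module on which each X_i acts bijectively and which is free as a ℂ[X₁^{±1},...,X_n^{±1}]-module. Then every short exact sequence of weight s-modules 0 → M → M' → M → 0 (with M' semisimple over h) splits; i.e. Ext¹_{(s,h)}(M,M) = 0. -/

import Mathlib

open DirectSum

namespace SelfExtAux

/-! ### A monoid-algebra module structure from commuting automorphisms -/

section laurent

variable {V : Type*} [AddCommGroup V] [Module ℂ V]

/-- Pack a finsupp into a pi type of multiplicatives, as a monoid hom. -/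
def packHom (n : ℕ) : Multiplicative (Fin n →₀ ℤ) →* (Fin n → Multiplicative ℤ) where
  toFun k := fun i => Multiplicative.ofAdd (Multiplicative.toAdd k i)
  map_one' := by funext i; simp
  map_mul' k l := by funext i; simp

/-- The monoid hom from equivs to endomorphisms. -/
def toEndHom : (V ≃ₗ[ℂ] V) →* Module.End ℂ V where
  toFun e := e.toLinearMap
  map_one' := rfl
  map_mul' a b := rfl

/-- The algebra morphism from the Laurent polynomial ring (monoid algebra of `ℤ^n`)
determined by a family of commuting automorphisms. -/
noncomputable def laurentHom {n : ℕ} (E : Fin n → (V ≃ₗ[ℂ] V))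
    (hE : Pairwise fun i j => ∀ x y : Multiplicative ℤ,
      Commute ((zpowersHom _ (E i)) x) ((zpowersHom _ (E j)) y)) :
    AddMonoidAlgebra ℂ (Fin n →₀ ℤ) →ₐ[ℂ] Module.End ℂ V :=
  AddMonoidAlgebra.lift ℂ (Module.End ℂ V) (Fin n →₀ ℤ)
    ((toEndHom).comp ((MonoidHom.noncommPiCoprod (fun i => zpowersHom _ (E i)) hE).comp
      (packHom n)))

theorem laurentHom_single_one {n : ℕ} (E : Fin n → (V ≃ₗ[ℂ] V)) (hE) (i : Fin n) :
    laurentHom E hE (AddMonoidAlgebra.single (Finsupp.single i (1 : ℤ)) (1 : ℂ)) =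
      (E i).toLinearMap := by
  classical
  rw [laurentHom, AddMonoidAlgebra.lift_single, one_smul]
  have hpack : packHom n (Multiplicative.ofAdd (Finsupp.single i (1 : ℤ))) =
      Pi.mulSingle i (Multiplicative.ofAdd (1 : ℤ)) := by
    funext j
    by_cases hji : j = i
    · subst hji; simp [packHom, Pi.mulSingle_eq_same]
    · simp [packHom, Finsupp.single_eq_of_ne hji, Pi.mulSingle_eq_of_ne hji]
  simp only [MonoidHom.comp_apply, hpack, MonoidHom.noncommPiCoprod_mulSingle]
  simp [toEndHom, zpowersHom_apply]
  rfl

end laurent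

/-! ### Weight submodules -/

section wt

variable (s : Type*) [LieRing s] [LieAlgebra ℂ s] (h : LieSubalgebra ℂ s)
variable (V : Type*) [AddCommGroup V] [Module ℂ V] [LieRingModule s V] [LieModule ℂ s V]

/-- The `χ`-weight space of `V` for the subalgebra `h`. -/
def wtsp (χ : h → ℂ) : Submodule ℂ V where
  carrier := {v | ∀ a : h, ⁅(a : s), v⁆ = χ a • v}
  add_mem' := by intro x y hx hy a; simp [lie_add, hx a, hy a, smul_add]
  zero_mem' := by intro a; simp
  smul_mem' := by
    intro c x hx a
    simp only [lie_smul, hx a]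
    rw [smul_comm]

theorem mem_wtsp {χ : h → ℂ} {v : V} :
    v ∈ wtsp s h V χ ↔ ∀ a : h, ⁅(a : s), v⁆ = χ a • v := Iff.rfl

theorem wtsp_internal [DecidableEq (h → ℂ)] (habelian : IsLieAbelian h)
    (hwt : Submodule.span ℂ
      {m : V | ∃ χ : h → ℂ, ∀ a : h, ⁅(a : s), m⁆ = χ a • m} = ⊤) :
    DirectSum.IsInternal (fun χ : h → ℂ => wtsp s h V χ) := by
  haveI : LieModule.IsTrivial h h := habelian
  apply DirectSum.isInternal_submodule_of_iSupIndep_of_iSup_eq_top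
  · have h1 : iSupIndep
        (fun χ : h → ℂ => ((LieModule.genWeightSpace V χ : LieSubmodule ℂ h V) :
          Submodule ℂ V)) := by
      rw [LieSubmodule.iSupIndep_toSubmodule]
      exact LieModule.iSupIndep_genWeightSpace ℂ h V
    refine h1.mono fun χ => ?_
    intro v hv
    rw [LieSubmodule.mem_toSubmodule, LieModule.mem_genWeightSpace]
    intro a
    refine ⟨1, ?_⟩
    have hva : ⁅(a : s), v⁆ = χ a • v := hv a
    simp [LieModule.toEnd_apply_apply, hva]
  · rw [eq_top_iff, ← hwt, Submodule.span_le]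
    rintro v ⟨χ, hχ⟩
    exact Submodule.mem_iSup_of_mem χ hχ

theorem wtsp_lie_shift (X_ : s) (αf : h → ℂ) (hX : ∀ a : h, ⁅(a : s), X_⁆ = αf a • X_)
    {χ : h → ℂ} {v : V} (hv : v ∈ wtsp s h V χ) : ⁅X_, v⁆ ∈ wtsp s h V (χ + αf) := by
  intro a
  have hl : ⁅(a : s), ⁅X_, v⁆⁆ = ⁅⁅(a : s), X_⁆, v⁆ + ⁅X_, ⁅(a : s), v⁆⁆ := leibniz_lie _ _ _
  rw [hl, hX a, hv a, smul_lie, lie_smul, Pi.add_apply, add_smul]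
  abel

end wt

/-! ### Projections from an internal direct sum decomposition -/

section proj

variable {V : Type*} [AddCommGroup V] [Module ℂ V]
variable {ι : Type*} [DecidableEq ι] (p : ι → Submodule ℂ V) (hp : DirectSum.IsInternal p)

/-- The projection onto the `χ`-component of an internal direct sum decomposition,
as an endomorphism of `V`. -/
noncomputable def projL (χ : ι) : V →ₗ[ℂ] V where
  toFun v := (((LinearEquiv.ofBijective (DirectSum.coeLinearMap p) hp).symm v) χ : V)
  map_add' u v := by simp
  map_smul' c v := by
    show (((LinearEquiv.ofBijective (DirectSum.coeLinearMap p) hp).symm (c • v)) χ : V) = _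
    rw [map_smul]
    rfl

theorem projL_mem (χ : ι) (v : V) : projL p hp χ v ∈ p χ := by
  simp only [projL, LinearMap.coe_mk, AddHom.coe_mk]
  exact SetLike.coe_mem _

theorem projL_of_mem {χ : ι} {v : V} (hv : v ∈ p χ) : projL p hp χ v = v := by
  simp only [projL, LinearMap.coe_mk, AddHom.coe_mk]
  rw [hp.ofBijective_coeLinearMap_of_mem hv]

theorem projL_of_mem_ne {χ μ : ι} (hne : μ ≠ χ) {v : V} (hv : v ∈ p μ) :
    projL p hp χ v = 0 := by
  simp only [projL, LinearMap.coe_mk, AddHom.coe_mk]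
  rw [hp.ofBijective_coeLinearMap_of_mem_ne hne hv]
  rfl

end proj

end SelfExtAux


open SelfExtAux

/-- Let `s = h ⊕ g₁`, where `h` is abelian and `g₁ = span(X₁,…,Xₙ)` is an
abelian ideal consisting of `ad h`-eigenvectors.  Let `M` be a weight `s`-module on which every
`Xᵢ` acts bijectively and which is free as a module over the Laurent polynomial ring
`ℂ[X₁^{±1},…,Xₙ^{±1}]` (encoded as the monoid algebra of `Fin n →₀ ℤ`, acting compatibly).
Then every short exact sequence of weight `s`-modules `0 → M → M' → M → 0` splits, i.e.
`Ext¹_{(s,h)}(M,M) = 0`. -/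
theorem self_extension_splits
    (s : Type*) [LieRing s] [LieAlgebra ℂ s]
    (h : LieSubalgebra ℂ s) (habelian : IsLieAbelian h)
    (n : ℕ) (X : Fin n → s)
    (hdecomp : h.toSubmodule ⊔ Submodule.span ℂ (Set.range X) = ⊤)
    (heig : ∀ i, ∃ α : h → ℂ, ∀ a : h, ⁅(a : s), X i⁆ = α a • X i)
    (hcomm : ∀ i j, ⁅X i, X j⁆ = 0)
    (hideal : ∀ a : s, ∀ i, ⁅a, X i⁆ ∈ Submodule.span ℂ (Set.range X))
    (M : Type*) [AddCommGroup M] [Module ℂ M] [LieRingModule s M] [LieModule ℂ s M]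
    (hwt : Submodule.span ℂ
      {m : M | ∃ χ : h → ℂ, ∀ a : h, ⁅(a : s), m⁆ = χ a • m} = ⊤)
    (hbij : ∀ i, Function.Bijective (fun m : M => ⁅X i, m⁆))
    [Module (AddMonoidAlgebra ℂ (Fin n →₀ ℤ)) M]
    [IsScalarTower ℂ (AddMonoidAlgebra ℂ (Fin n →₀ ℤ)) M]
    (hcompat : ∀ (i : Fin n) (m : M),
      (AddMonoidAlgebra.single (Finsupp.single i (1 : ℤ)) (1 : ℂ)) • m = ⁅X i, m⁆)
    [Module.Free (AddMonoidAlgebra ℂ (Fin n →₀ ℤ)) M] :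
    ∀ (M' : Type*) (_ : AddCommGroup M') (_ : Module ℂ M') (_ : LieRingModule s M')
      (_ : LieModule ℂ s M'),
      (Submodule.span ℂ {m : M' | ∃ χ : h → ℂ, ∀ a : h, ⁅(a : s), m⁆ = χ a • m} = ⊤) →
      ∀ (f : M →ₗ⁅ℂ,s⁆ M') (g : M' →ₗ⁅ℂ,s⁆ M),
        Function.Injective f → Function.Surjective g →
        (∀ x : M', g x = 0 ↔ ∃ m : M, f m = x) →
        ∃ σ : M →ₗ⁅ℂ,s⁆ M', ∀ m : M, g (σ m) = m := by
  classical
  intro M' _ _ _ _ hwt' f g hfinj hgsurj hexact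
  haveI : LieModule.IsTrivial h h := habelian
  choose α hα using heig
  -- Each `X i` acts bijectively on `M'`.
  have hbij' : ∀ i, Function.Bijective (fun u : M' => ⁅X i, u⁆) := by
    intro i
    have h0 : ∀ u : M', ⁅X i, u⁆ = 0 → u = 0 := by
      intro u hu
      have hgu : ⁅X i, g u⁆ = (0 : M) := by rw [← g.map_lie, hu, map_zero]
      have hgu0 : g u = 0 := (hbij i).1 (a₁ := g u) (a₂ := 0) (by simpa using hgu)
      obtain ⟨m, hm⟩ := (hexact u).mp hgu0
      have hfm : f ⁅X i, m⁆ = 0 := by rw [f.map_lie, hm, hu]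
      have hm0 : ⁅X i, m⁆ = 0 := hfinj (by simpa using hfm)
      have hmz : m = 0 := (hbij i).1 (a₁ := m) (a₂ := 0) (by simpa using hm0)
      rw [← hm, hmz, map_zero]
    constructor
    · intro u v huv
      have := h0 (u - v) (by rw [lie_sub]; rw [show ⁅X i, u⁆ = ⁅X i, v⁆ from huv, sub_self])
      exact sub_eq_zero.mp this
    · intro u
      obtain ⟨m, hm⟩ := (hbij i).2 (g u)
      obtain ⟨w, hw⟩ := hgsurj m
      have hker : g (u - ⁅X i, w⁆) = 0 := by
        rw [map_sub, g.map_lie, hw]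
        rw [show ⁅X i, m⁆ = g u from hm, sub_self]
      obtain ⟨m₁, hm₁⟩ := (hexact _).mp hker
      obtain ⟨m₂, hm₂⟩ := (hbij i).2 m₁
      refine ⟨w + f m₂, ?_⟩
      show ⁅X i, w + f m₂⁆ = u
      rw [lie_add, ← f.map_lie]
      rw [show ⁅X i, m₂⁆ = m₁ from hm₂, hm₁]
      abel
  -- The Laurent-polynomial module structure on `M'`.
  let E : Fin n → (M' ≃ₗ[ℂ] M') :=
    fun i => LinearEquiv.ofBijective (LieModule.toEnd ℂ s M' (X i)) (hbij' i)
  have hEapp : ∀ i (u : M'), E i u = ⁅X i, u⁆ := fun i u => rfl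
  have hEcomm : Pairwise fun (i j : Fin n) => ∀ x y : Multiplicative ℤ,
      Commute ((zpowersHom _ (E i)) x) ((zpowersHom _ (E j)) y) := by
    intro i j _ x y
    have hc : Commute (E i) (E j) := by
      refine LinearEquiv.ext fun u => ?_
      show E i (E j u) = E j (E i u)
      rw [hEapp, hEapp, hEapp, hEapp]
      have hll := lie_lie (X i) (X j) u
      rw [hcomm i j, zero_lie] at hll
      exact sub_eq_zero.mp hll.symm
    simpa [zpowersHom_apply] using
      Commute.zpow_zpow hc (Multiplicative.toAdd x) (Multiplicative.toAdd y)
  let Φ := laurentHom E hEcomm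
  letI : Module (AddMonoidAlgebra ℂ (Fin n →₀ ℤ)) M' := Module.compHom M' Φ.toRingHom
  have hsmul' : ∀ (r : AddMonoidAlgebra ℂ (Fin n →₀ ℤ)) (u : M'), r • u = Φ r u :=
    fun r u => rfl
  letI : IsScalarTower ℂ (AddMonoidAlgebra ℂ (Fin n →₀ ℤ)) M' :=
    ⟨fun c r u => by rw [hsmul', hsmul', map_smul, LinearMap.smul_apply]⟩
  have hXM' : ∀ (i : Fin n) (u : M'),
      (AddMonoidAlgebra.single (Finsupp.single i (1 : ℤ)) (1 : ℂ)) • u = ⁅X i, u⁆ := by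
    intro i u
    rw [hsmul']
    show (laurentHom E hEcomm) _ u = _
    rw [laurentHom_single_one E hEcomm i]
    rfl
  -- `g` commutes with the Laurent module structure.
  have hmulinv : ∀ i : Fin n,
      (AddMonoidAlgebra.single (Finsupp.single i (1 : ℤ)) (1 : ℂ)) *
        (AddMonoidAlgebra.single (Finsupp.single i (-1 : ℤ)) (1 : ℂ)) = 1 := by
    intro i
    rw [AddMonoidAlgebra.single_mul_single, one_mul, ← Finsupp.single_add]
    simp [AddMonoidAlgebra.one_def]
  have hstep1 : ∀ (i : Fin n) (u : M'),
      g ((AddMonoidAlgebra.single (Finsupp.single i (1 : ℤ)) (1 : ℂ)) • u) =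
        (AddMonoidAlgebra.single (Finsupp.single i (1 : ℤ)) (1 : ℂ)) • g u := by
    intro i u
    rw [hXM', g.map_lie, hcompat]
  have hstepneg : ∀ (i : Fin n) (u : M'),
      g ((AddMonoidAlgebra.single (Finsupp.single i (-1 : ℤ)) (1 : ℂ)) • u) =
        (AddMonoidAlgebra.single (Finsupp.single i (-1 : ℤ)) (1 : ℂ)) • g u := by
    intro i u
    refine (hbij i).1 (a₁ := _) (a₂ := _) ?_
    show ⁅X i, g ((AddMonoidAlgebra.single (Finsupp.single i (-1 : ℤ)) (1 : ℂ)) • u)⁆ =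
      ⁅X i, (AddMonoidAlgebra.single (Finsupp.single i (-1 : ℤ)) (1 : ℂ)) • g u⁆
    rw [← g.map_lie, ← hXM' i, ← hcompat i, ← mul_smul, ← mul_smul, hmulinv i, one_smul,
      one_smul]
  have hbase : ∀ (i : Fin n) (z : ℤ) (u : M'),
      g ((AddMonoidAlgebra.single (Finsupp.single i z) (1 : ℂ)) • u) =
        (AddMonoidAlgebra.single (Finsupp.single i z) (1 : ℂ)) • g u := by
    intro i z
    induction z using Int.induction_on with
    | zero =>
      intro u
      rw [Finsupp.single_zero, ← AddMonoidAlgebra.one_def, one_smul, one_smul]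
    | succ z ih =>
      intro u
      have key : (AddMonoidAlgebra.single (Finsupp.single i (z : ℤ)) (1 : ℂ)) *
          AddMonoidAlgebra.single (Finsupp.single i (1 : ℤ)) 1 =
          AddMonoidAlgebra.single (Finsupp.single i ((z : ℤ) + 1)) 1 := by
        rw [AddMonoidAlgebra.single_mul_single, one_mul, ← Finsupp.single_add]
      rw [← key, mul_smul, mul_smul, ih, hstep1]
    | pred z ih =>
      intro u
      have key : (AddMonoidAlgebra.single (Finsupp.single i (-(z : ℤ))) (1 : ℂ)) *
          AddMonoidAlgebra.single (Finsupp.single i (-1 : ℤ)) 1 =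
          AddMonoidAlgebra.single (Finsupp.single i (-(z : ℤ) - 1)) 1 := by
        rw [AddMonoidAlgebra.single_mul_single, one_mul, ← Finsupp.single_add,
          sub_eq_add_neg]
      rw [← key, mul_smul, mul_smul, ih, hstepneg]
  have hsingle : ∀ (k : Fin n →₀ ℤ) (u : M'),
      g ((AddMonoidAlgebra.single k (1 : ℂ)) • u) = (AddMonoidAlgebra.single k (1 : ℂ)) • g u := by
    intro k
    induction k using Finsupp.induction with
    | zero =>
      intro u
      rw [← AddMonoidAlgebra.one_def, one_smul, one_smul]
    | single_add i z k hik hz ih =>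
      intro u
      have key : (AddMonoidAlgebra.single (Finsupp.single i z) (1 : ℂ)) *
          AddMonoidAlgebra.single k 1 = AddMonoidAlgebra.single (Finsupp.single i z + k) 1 := by
        rw [AddMonoidAlgebra.single_mul_single, one_mul]
      rw [← key, mul_smul, mul_smul, hbase, ih]
  have hgR : ∀ (r : AddMonoidAlgebra ℂ (Fin n →₀ ℤ)) (u : M'), g (r • u) = r • g u := by
    intro r
    induction r using AddMonoidAlgebra.induction with
    | zero =>
      intro u
      rw [zero_smul, zero_smul, map_zero]
    | single_add k c r hkr hc ih =>
      intro u
      rw [add_smul, add_smul, map_add, ih]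
      congr 1
      have hc' : (AddMonoidAlgebra.single k c : AddMonoidAlgebra ℂ (Fin n →₀ ℤ)) =
          c • AddMonoidAlgebra.single k 1 := by
        rw [AddMonoidAlgebra.smul_single, smul_eq_mul, mul_one]
      rw [hc', smul_assoc, smul_assoc, map_smul, hsingle]
  -- use projectivity to get a Laurent-linear splitting σ₀.
  let gR : M' →ₗ[AddMonoidAlgebra ℂ (Fin n →₀ ℤ)] M :=
    { toFun := g, map_add' := fun x y => g.map_add x y, map_smul' := fun r u => hgR r u }
  obtain ⟨σ₀, hσ₀⟩ := Module.projective_lifting_property gR LinearMap.id hgsurj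
  have hgσ₀ : ∀ m : M, g (σ₀ m) = m := fun m => DFunLike.congr_fun hσ₀ m
  have hσ₀X : ∀ (i : Fin n) (m : M), σ₀ ⁅X i, m⁆ = ⁅X i, σ₀ m⁆ := by
    intro i m
    rw [← hcompat i m, map_smul, hXM']
  -- Weight space decompositions.
  have hintM : DirectSum.IsInternal (fun χ : (h → ℂ) => wtsp s h M χ) :=
    wtsp_internal s h M habelian hwt
  have hintM' : DirectSum.IsInternal (fun χ : (h → ℂ) => wtsp s h M' χ) :=
    wtsp_internal s h M' habelian hwt'
  have hsupM : ⨆ χ : (h → ℂ), wtsp s h M χ = ⊤ := hintM.submodule_iSup_eq_top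
  have hsupM' : ⨆ χ : (h → ℂ), wtsp s h M' χ = ⊤ := hintM'.submodule_iSup_eq_top
  -- the weight-diagonal part of σ₀.
  let D := LinearEquiv.ofBijective
    (DirectSum.coeLinearMap (fun χ : (h → ℂ) => wtsp s h M χ)) hintM
  let τ : ∀ χ : (h → ℂ), (wtsp s h M χ) →ₗ[ℂ] (⨁ χ : (h → ℂ), wtsp s h M' χ) :=
    fun χ => (DirectSum.lof ℂ (h → ℂ) (fun χ => wtsp s h M' χ) χ) ∘ₗ
      LinearMap.codRestrict (wtsp s h M' χ)
        ((projL (fun χ : (h → ℂ) => wtsp s h M' χ) hintM' χ) ∘ₗ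
          (σ₀.restrictScalars ℂ) ∘ₗ (wtsp s h M χ).subtype)
        (fun m => projL_mem _ hintM' χ _)
  let σlin : M →ₗ[ℂ] M' :=
    (DirectSum.coeLinearMap (fun χ : (h → ℂ) => wtsp s h M' χ)) ∘ₗ
      (DirectSum.toModule ℂ (h → ℂ) (⨁ χ : (h → ℂ), wtsp s h M' χ) τ) ∘ₗ D.symm.toLinearMap
  have hσval : ∀ (χ : h → ℂ) (m : M), m ∈ wtsp s h M χ →
      σlin m = projL (fun χ : (h → ℂ) => wtsp s h M' χ) hintM' χ (σ₀ m) := by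
    intro χ m hm
    have h1 : D.symm m = DirectSum.lof ℂ (h → ℂ) (fun χ => wtsp s h M χ) χ ⟨m, hm⟩ := by
      apply (LinearEquiv.symm_apply_eq D).mpr
      show m = DirectSum.coeLinearMap (fun χ : (h → ℂ) => wtsp s h M χ) _
      rw [DirectSum.lof_eq_of, DirectSum.coeLinearMap_of]
    show DirectSum.coeLinearMap (fun χ : (h → ℂ) => wtsp s h M' χ)
      ((DirectSum.toModule ℂ (h → ℂ) (⨁ χ : (h → ℂ), wtsp s h M' χ) τ) (D.symm m)) = _
    rw [h1, DirectSum.toModule_lof]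
    show DirectSum.coeLinearMap (fun χ : (h → ℂ) => wtsp s h M' χ)
      ((DirectSum.lof ℂ (h → ℂ) (fun χ => wtsp s h M' χ) χ) _) = _
    rw [DirectSum.lof_eq_of, DirectSum.coeLinearMap_of, LinearMap.codRestrict_apply]
    rfl
  -- g intertwines the projections.
  have hgwt : ∀ (χ : h → ℂ) (u : M'), u ∈ wtsp s h M' χ → g u ∈ wtsp s h M χ := by
    intro χ u hu a
    rw [← g.map_lie, hu a, map_smul]
  have hgP' : ∀ (χ : h → ℂ) (u : M'),
      g (projL (fun χ : (h → ℂ) => wtsp s h M' χ) hintM' χ u) =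
        projL (fun χ : (h → ℂ) => wtsp s h M χ) hintM χ (g u) := by
    intro χ u
    have hu : u ∈ ⨆ χ : (h → ℂ), wtsp s h M' χ := by rw [hsupM']; trivial
    refine Submodule.iSup_induction
      (motive := fun w : M' => g (projL (fun χ : (h → ℂ) => wtsp s h M' χ) hintM' χ w) =
        projL (fun χ : (h → ℂ) => wtsp s h M χ) hintM χ (g w))
      _ hu (fun μ v hv => ?_) ?_ (fun x y hx hy => ?_) <;> beta_reduce
    · by_cases hμ : μ = χ
      · subst hμ
        rw [projL_of_mem (fun χ : (h → ℂ) => wtsp s h M' χ) hintM' hv,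
          projL_of_mem (fun χ : (h → ℂ) => wtsp s h M χ) hintM (hgwt μ v hv)]
      · rw [projL_of_mem_ne (fun χ : (h → ℂ) => wtsp s h M' χ) hintM' hμ hv,
          projL_of_mem_ne (fun χ : (h → ℂ) => wtsp s h M χ) hintM hμ (hgwt μ v hv),
          map_zero]
    · simp only [map_zero, map_zero, lie_zero]
    · simp only [map_add, map_add, lie_add, hx, hy]
  have hgσ : ∀ m : M, g (σlin m) = m := by
    intro m
    have hm : m ∈ ⨆ χ : (h → ℂ), wtsp s h M χ := by rw [hsupM]; trivial
    refine Submodule.iSup_induction (motive := fun w : M => g (σlin w) = w)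
      _ hm (fun χ v hv => ?_) ?_ (fun x y hx hy => ?_) <;> beta_reduce
    · rw [hσval χ v hv, hgP', hgσ₀, projL_of_mem (fun χ : (h → ℂ) => wtsp s h M χ) hintM hv]
    · simp only [map_zero, map_zero, lie_zero]
    · simp only [map_add, map_add, lie_add, hx, hy]
  -- h-equivariance.
  have hha : ∀ (a : h) (m : M), σlin ⁅(a : s), m⁆ = ⁅(a : s), σlin m⁆ := by
    intro a m
    have hm : m ∈ ⨆ χ : (h → ℂ), wtsp s h M χ := by rw [hsupM]; trivial
    refine Submodule.iSup_induction
      (motive := fun w : M => σlin ⁅(a : s), w⁆ = ⁅(a : s), σlin w⁆)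
      _ hm (fun χ v hv => ?_) ?_ (fun x y hx hy => ?_) <;> beta_reduce
    · have h1 : ⁅(a : s), v⁆ = χ a • v := hv a
      have h2 : σlin v ∈ wtsp s h M' χ := by
        rw [hσval χ v hv]; exact projL_mem _ hintM' χ _
      rw [h1, map_smul, h2 a]
    · simp only [map_zero, map_zero, lie_zero]
    · simp only [map_add, map_add, lie_add, hx, hy]
  -- X-equivariance.
  have hPlie' : ∀ (i : Fin n) (χ : h → ℂ) (u : M'),
      ⁅X i, projL (fun χ : (h → ℂ) => wtsp s h M' χ) hintM' χ u⁆ =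
        projL (fun χ : (h → ℂ) => wtsp s h M' χ) hintM' (χ + α i) ⁅X i, u⁆ := by
    intro i χ u
    have hu : u ∈ ⨆ χ : (h → ℂ), wtsp s h M' χ := by rw [hsupM']; trivial
    refine Submodule.iSup_induction
      (motive := fun w : M' => ⁅X i, projL (fun χ : (h → ℂ) => wtsp s h M' χ) hintM' χ w⁆ =
        projL (fun χ : (h → ℂ) => wtsp s h M' χ) hintM' (χ + α i) ⁅X i, w⁆)
      _ hu (fun μ v hv => ?_) ?_ (fun x y hx hy => ?_) <;> beta_reduce
    · by_cases hμ : μ = χ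
      · subst hμ
        rw [projL_of_mem (fun χ : (h → ℂ) => wtsp s h M' χ) hintM' hv,
          projL_of_mem (fun χ : (h → ℂ) => wtsp s h M' χ) hintM'
            (wtsp_lie_shift s h M' (X i) (α i) (hα i) hv)]
      · have hμ' : μ + α i ≠ χ + α i := fun hcon => hμ (add_right_cancel hcon)
        rw [projL_of_mem_ne (fun χ : (h → ℂ) => wtsp s h M' χ) hintM' hμ hv, lie_zero,
          projL_of_mem_ne (fun χ : (h → ℂ) => wtsp s h M' χ) hintM' hμ'
            (wtsp_lie_shift s h M' (X i) (α i) (hα i) hv)]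
    · simp only [map_zero, map_zero, lie_zero]
    · simp only [map_add, map_add, lie_add, hx, hy]
  have hXa : ∀ (i : Fin n) (m : M), σlin ⁅X i, m⁆ = ⁅X i, σlin m⁆ := by
    intro i m
    have hm : m ∈ ⨆ χ : (h → ℂ), wtsp s h M χ := by rw [hsupM]; trivial
    refine Submodule.iSup_induction
      (motive := fun w : M => σlin ⁅X i, w⁆ = ⁅X i, σlin w⁆)
      _ hm (fun χ v hv => ?_) ?_ (fun x y hx hy => ?_) <;> beta_reduce
    · rw [hσval (χ + α i) _ (wtsp_lie_shift s h M (X i) (α i) (hα i) hv), hσ₀X i v,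
        ← hPlie', ← hσval χ v hv]
    · simp only [map_zero, map_zero, lie_zero]
    · simp only [map_add, map_add, lie_add, hx, hy]
  -- assemble the Lie module splitting.
  have hall : ∀ x : s, ∀ m : M, σlin ⁅x, m⁆ = ⁅x, σlin m⁆ := by
    let Sset : Submodule ℂ s :=
      { carrier := {x : s | ∀ m : M, σlin ⁅x, m⁆ = ⁅x, σlin m⁆}
        add_mem' := fun hx hy m => by
          rw [add_lie, add_lie, ← hx m, ← hy m, map_add]
        zero_mem' := fun m => by rw [zero_lie, zero_lie, map_zero]
        smul_mem' := fun c x hx m => by rw [smul_lie, smul_lie, ← hx m, map_smul] }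
    have hS : (⊤ : Submodule ℂ s) ≤ Sset := by
      rw [← hdecomp]
      apply sup_le
      · intro x hx
        exact fun m => hha ⟨x, hx⟩ m
      · rw [Submodule.span_le]
        rintro x ⟨i, rfl⟩
        exact fun m => hXa i m
    exact fun x => hS Submodule.mem_top
  exact ⟨{ toLinearMap := σlin, map_lie' := fun {x m} => hall x m }, hgσ⟩
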